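/- (Characterization of the no-transfer rule) A rule φ on linear hierarchy problems with needs satisfies highest rank independence and equal treatment of equals if and only if φ_i(M, r, z) = r_i for every problem and every agent i. -/

import Mathlib

/-- A valid linear hierarchy problem with needs. -/
def Valid (m : ℕ) (r z : ℕ → ℝ) : Prop :=
  0 < m ∧ ∀ i < m, 0 ≤ z i ∧ z i ≤ r i

theorem characterization_no_transfer_rule
    (φ : ℕ → (ℕ → ℝ) → (ℕ → ℝ) → ℕ → ℝ)
    -- φ is a rule: nonnegative allocations satisfying balance
    (hrule : ∀ m r z, Valid m r z →
      (∀ i < m, 0 ≤ φ m r z i) ∧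
      ∑ i ∈ Finset.range m, φ m r z i = ∑ i ∈ Finset.range m, r i) :
    -- highest rank independence and equal treatment of equals
    ((∀ m r z r' z', Valid m r z → Valid m r' z' →
        (∀ i, i + 1 < m → r i = r' i ∧ z i = z' i) →
        ∀ i, i + 1 < m → φ m r z i = φ m r' z' i) ∧
     (∀ m r z, Valid m r z → ∀ i < m, ∀ j < m,
        r i = r j → z i = z j → φ m r z i = φ m r z j))
    ↔
    -- the no-transfer rule
    (∀ m r z, Valid m r z → ∀ i < m, φ m r z i = r i) := by
  constructor
  · rintro ⟨hri, ete⟩ m r z hval i hi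
    obtain ⟨hm, hz⟩ := hval
    obtain ⟨n, rfl⟩ : ∃ n, m = n + 1 := ⟨m - 1, by omega⟩
    obtain ⟨hpos, hbal⟩ := hrule (n + 1) r z ⟨hm, hz⟩
    rcases Nat.eq_zero_or_pos n with rfl | hn
    · interval_cases i
      simpa using hbal
    · set C : ℝ := ∑ k ∈ Finset.range n, (r k - φ (n + 1) r z k) with hCdef
      have key : ∀ j < n, φ (n + 1) r z j = r j + C := by
        intro j hj
        set r' := Function.update r n (r j) with hr'
        set z' := Function.update z n (z j) with hz'
        have hval' : Valid (n + 1) r' z' := by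
          refine ⟨Nat.succ_pos n, fun k hk => ?_⟩
          rcases eq_or_ne k n with rfl | hne
          · simpa [hr', hz'] using hz j (by omega)
          · simpa [hr', hz', Function.update_of_ne hne] using hz k (by omega)
        have heq : ∀ k, k + 1 < n + 1 → φ (n + 1) r z k = φ (n + 1) r' z' k :=
          hri (n + 1) r z r' z' ⟨hm, hz⟩ hval'
            (fun k hk => by
              constructor <;>
                simp [hr', hz', Function.update_of_ne (show k ≠ n by omega)])
        have hete : φ (n + 1) r' z' j = φ (n + 1) r' z' n :=
          ete (n + 1) r' z' hval' j (by omega) n (by omega)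
            (by simp [hr', Function.update_of_ne (show j ≠ n by omega)])
            (by simp [hz', Function.update_of_ne (show j ≠ n by omega)])
        obtain ⟨_, hbal'⟩ := hrule (n + 1) r' z' hval'
        rw [Finset.sum_range_succ, Finset.sum_range_succ] at hbal'
        have h1 : ∑ k ∈ Finset.range n, φ (n + 1) r' z' k
            = ∑ k ∈ Finset.range n, φ (n + 1) r z k :=
          Finset.sum_congr rfl fun k hk =>
            (heq k (by have := Finset.mem_range.mp hk; omega)).symm
        have h2 : ∑ k ∈ Finset.range n, r' k = ∑ k ∈ Finset.range n, r k :=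
          Finset.sum_congr rfl fun k hk => by
            have := Finset.mem_range.mp hk
            simp [hr', Function.update_of_ne (show k ≠ n by omega)]
        have h3 : φ (n + 1) r' z' n = φ (n + 1) r z j := by
          rw [← hete, ← heq j (by omega)]
        have h4 : r' n = r j := by simp [hr']
        rw [h1, h2, h3, h4] at hbal'
        have : C = ∑ k ∈ Finset.range n, r k - ∑ k ∈ Finset.range n, φ (n + 1) r z k := by
          rw [hCdef, Finset.sum_sub_distrib]
        linarith
      have hC : C = 0 := by
        have hsum : ∑ j ∈ Finset.range n, φ (n + 1) r z j
            = ∑ j ∈ Finset.range n, (r j + C) :=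
          Finset.sum_congr rfl fun j hj => key j (Finset.mem_range.mp hj)
        rw [Finset.sum_add_distrib, Finset.sum_const, nsmul_eq_mul, Finset.card_range] at hsum
        have hCval : C = ∑ k ∈ Finset.range n, r k - ∑ k ∈ Finset.range n, φ (n + 1) r z k := by
          rw [hCdef, Finset.sum_sub_distrib]
        have hmul : ((n : ℝ) + 1) * C = 0 := by linarith
        have hne : ((n : ℝ) + 1) ≠ 0 := by positivity
        exact (mul_eq_zero.mp hmul).resolve_left hne
      have hfirst : ∀ j < n, φ (n + 1) r z j = r j := fun j hj => by
        rw [key j hj, hC, add_zero]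
      rcases Nat.lt_or_ge i n with hlt | hge
      · exact hfirst i hlt
      · have : i = n := by omega
        subst this
        rw [Finset.sum_range_succ, Finset.sum_range_succ,
          Finset.sum_congr rfl (fun k hk => hfirst k (Finset.mem_range.mp hk))] at hbal
        linarith
  · intro h
    constructor
    · intro m r z r' z' hv hv' hagree i hi
      rw [h m r z hv i (by omega), h m r' z' hv' i (by omega), (hagree i hi).1]
    · intro m r z hv i hi j hj hr _
      rw [h m r z hv i hi, h m r z hv j hj, hr]
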